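/- Suppose that for every i ∈ {1,…,n} the number m_i := −2λ_i is a natural number belonging to {0, 1, …, k−1}, and let r = max_i m_i. Then the quantity N_k + N_{k−1} − 2·rank(T), where T : ℝ^{{α∈ℕⁿ : |α|=k}} → ℝ^{{β∈ℕⁿ : |β|=k−1}} is the linear map (T D)_β = Σ_{i=1}^n (β_i + 1)(β_i + 2λ_i) D_{β^i} (this quantity equals dim ker(T) + dim coker(T), and is the dimension of the first cohomology space of sl(2) with coefficients in the n-ary differential operators of resonance δ = k), satisfies C(n + k − 2, k) ≤ N_k + N_{k−1} − 2·rank(T) ≤ C(n + k − 2, k) + 2·C(n + k − r − 3, k − r − 1). -/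

import Mathlib

open scoped BigOperators

noncomputable section

/-- For `|β| = k − 1`, the multi-index `β^i` (the `i`-th entry increased by `1`) has
`|β^i| = k`. -/
def upIdx (n k : ℕ) (hk : 1 ≤ k) (β : {β : Fin n → ℕ // ∑ i, β i = k - 1}) (i : Fin n) :
    {α : Fin n → ℕ // ∑ i, α i = k} :=
  ⟨Function.update β.1 i (β.1 i + 1), by
    have h1 : ∑ j, Function.update β.1 i (β.1 i + 1) j
        = (β.1 i + 1) + ∑ j ∈ Finset.univ.erase i, β.1 j := by
      rw [← Finset.add_sum_erase _ _ (Finset.mem_univ i), Function.update_self]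
      congr 1
      exact Finset.sum_congr rfl fun j hj =>
        Function.update_of_ne (Finset.mem_erase.1 hj).1 _ _
    have h2 : β.1 i + ∑ j ∈ Finset.univ.erase i, β.1 j = k - 1 := by
      rw [Finset.add_sum_erase _ _ (Finset.mem_univ i)]; exact β.2
    omega⟩

/-- The linear map `T : ℝ^{{|α|=k}} → ℝ^{{|β|=k−1}}`,
`(T D)_β = Σᵢ (βᵢ+1)(βᵢ+2λᵢ) D_{βⁱ}`. -/
def Tmap (n k : ℕ) (hk : 1 ≤ k) (lam : Fin n → ℝ) :
    ({α : Fin n → ℕ // ∑ i, α i = k} → ℝ) →ₗ[ℝ]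
      ({β : Fin n → ℕ // ∑ i, β i = k - 1} → ℝ) where
  toFun D := fun β => ∑ i, ((β.1 i : ℝ) + 1) * ((β.1 i : ℝ) + 2 * lam i)
    * D (upIdx n k hk β i)
  map_add' D E := by
    funext β
    simp only [Pi.add_apply, mul_add]
    rw [Finset.sum_add_distrib]
  map_smul' r D := by
    funext β
    simp only [Pi.smul_apply, smul_eq_mul, RingHom.id_apply]
    rw [Finset.mul_sum]
    exact Finset.sum_congr rfl fun i _ => by ring

-- ## Auxiliary material

/-- Stars and bars equivalence. -/
def sumTupleEquivSym (n m : ℕ) : {f : Fin n → ℕ // ∑ i, f i = m} ≃ Sym (Fin n) m :=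
  Equiv.trans
    (Equiv.subtypeEquiv (p := fun f => ∑ i, f i = m)
      (q := fun f : Fin n →₀ ℕ => (Finsupp.toMultiset f).card = m)
      Finsupp.equivFunOnFinite.symm (fun f => by
      rw [Finsupp.card_toMultiset, Finsupp.sum_fintype] <;> simp))
    (Equiv.subtypeEquiv (q := fun s : Multiset (Fin n) => Multiset.card s = m)
      Multiset.toFinsupp.toEquiv.symm (fun f => by
      rw [show (Multiset.toFinsupp.toEquiv.symm f : Multiset (Fin n))
        = Finsupp.toMultiset f from rfl]))

instance sumTupleFintype (n m : ℕ) : Fintype {f : Fin n → ℕ // ∑ i, f i = m} :=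
  Fintype.ofEquiv _ (sumTupleEquivSym n m).symm

lemma card_sumTuple (n m : ℕ) :
    Nat.card {f : Fin n → ℕ // ∑ i, f i = m} = (n + m - 1).choose m := by
  rw [Nat.card_congr (sumTupleEquivSym n m), Nat.card_eq_fintype_card,
    Sym.card_sym_eq_choose, Fintype.card_fin]

lemma coord_le (n m : ℕ) (f : {f : Fin n → ℕ // ∑ i, f i = m}) (j : Fin n) : f.1 j ≤ m := by
  exact le_of_le_of_eq (Finset.single_le_sum (f := f.1) (fun i _ => Nat.zero_le _)
    (Finset.mem_univ j)) f.2

/-- The multi-index `α` with its `i`-th entry decreased by 1. -/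
def downIdx (n k : ℕ) (α : {α : Fin n → ℕ // ∑ i, α i = k}) (i : Fin n) (h : α.1 i ≠ 0) :
    {β : Fin n → ℕ // ∑ i, β i = k - 1} :=
  ⟨Function.update α.1 i (α.1 i - 1), by
    have h1 : ∑ j, Function.update α.1 i (α.1 i - 1) j
        = (α.1 i - 1) + ∑ j ∈ Finset.univ.erase i, α.1 j := by
      rw [← Finset.add_sum_erase _ _ (Finset.mem_univ i), Function.update_self]
      congr 1
      exact Finset.sum_congr rfl fun j hj =>
        Function.update_of_ne (Finset.mem_erase.1 hj).1 _ _
    have h2 : α.1 i + ∑ j ∈ Finset.univ.erase i, α.1 j = k := by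
      rw [Finset.add_sum_erase _ _ (Finset.mem_univ i)]; exact α.2
    omega⟩

lemma upIdx_coord (n k : ℕ) (hk : 1 ≤ k) (β : {β : Fin n → ℕ // ∑ i, β i = k - 1})
    (i : Fin n) : (upIdx n k hk β i).1 i = β.1 i + 1 := by
  simp [upIdx]

lemma upIdx_coord_ne (n k : ℕ) (hk : 1 ≤ k) (β : {β : Fin n → ℕ // ∑ i, β i = k - 1})
    (i j : Fin n) (h : j ≠ i) : (upIdx n k hk β i).1 j = β.1 j := by
  simp [upIdx, Function.update_of_ne h]

lemma downIdx_coord (n k : ℕ) (α : {α : Fin n → ℕ // ∑ i, α i = k}) (i : Fin n)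
    (h : α.1 i ≠ 0) : (downIdx n k α i h).1 i = α.1 i - 1 := by
  simp [downIdx]

lemma downIdx_coord_ne (n k : ℕ) (α : {α : Fin n → ℕ // ∑ i, α i = k}) (i j : Fin n)
    (h : α.1 i ≠ 0) (hj : j ≠ i) : (downIdx n k α i h).1 j = α.1 j := by
  simp [downIdx, Function.update_of_ne hj]

lemma down_up (n k : ℕ) (hk : 1 ≤ k) (β : {β : Fin n → ℕ // ∑ i, β i = k - 1}) (i : Fin n)
    (h : (upIdx n k hk β i).1 i ≠ 0) : downIdx n k (upIdx n k hk β i) i h = β := by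
  apply Subtype.ext
  funext j
  by_cases hj : j = i
  · subst hj; simp [downIdx, upIdx]
  · simp [downIdx, upIdx, Function.update_of_ne hj]

lemma up_down (n k : ℕ) (hk : 1 ≤ k) (α : {α : Fin n → ℕ // ∑ i, α i = k}) (i : Fin n)
    (h : α.1 i ≠ 0) : upIdx n k hk (downIdx n k α i h) i = α := by
  apply Subtype.ext
  funext j
  by_cases hj : j = i
  · subst hj; simp [downIdx, upIdx]; omega
  · simp [downIdx, upIdx, Function.update_of_ne hj]

lemma Tmap_single (n k : ℕ) (hk : 1 ≤ k) (lam : Fin n → ℝ)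
    (α : {α : Fin n → ℕ // ∑ i, α i = k}) :
    Tmap n k hk lam (Pi.single α (1:ℝ)) =
      ∑ i : Fin n, if h : α.1 i ≠ 0 then
        ((α.1 i : ℝ) * ((α.1 i : ℝ) - 1 + 2 * lam i)) •
          (Pi.single (downIdx n k α i h) (1:ℝ) : {β : Fin n → ℕ // ∑ i, β i = k - 1} → ℝ)
      else 0 := by
  funext γ
  rw [Finset.sum_apply]
  simp only [Tmap, LinearMap.coe_mk, AddHom.coe_mk]
  refine Finset.sum_congr rfl fun i _ => ?_
  by_cases he : upIdx n k hk γ i = α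
  · have hα : α.1 i = γ.1 i + 1 := by rw [← he]; exact upIdx_coord n k hk γ i
    have h0 : α.1 i ≠ 0 := by omega
    rw [dif_pos h0]
    have hd : downIdx n k α i h0 = γ := by
      subst he; exact down_up n k hk γ i h0
    rw [he, hd, Pi.smul_apply, Pi.single_eq_same, Pi.single_eq_same, hα, smul_eq_mul]
    push_cast
    ring
  · rw [Pi.single_eq_of_ne he, mul_zero]
    by_cases h0 : α.1 i ≠ 0
    · rw [dif_pos h0]
      have hd : downIdx n k α i h0 ≠ γ := by
        intro hc
        exact he (by rw [← hc, up_down])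
      rw [Pi.smul_apply, Pi.single_eq_of_ne (Ne.symm hd), smul_zero]
    · rw [dif_neg h0]; rfl

lemma card_B (n k : ℕ) (hn : 1 ≤ n) (hk : 1 ≤ k) :
    Nat.card {β : Fin n → ℕ // ∑ i, β i = k - 1} = (n + k - 2).choose (k - 1) := by
  rw [card_sumTuple]
  congr 1
  omega

lemma card_A (n k : ℕ) (hn : 1 ≤ n) (hk : 1 ≤ k) :
    Nat.card {α : Fin n → ℕ // ∑ i, α i = k}
      = (n + k - 2).choose (k - 1) + (n + k - 2).choose k := by
  rw [card_sumTuple]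
  have e1 : n + k - 1 = (n + k - 2) + 1 := by omega
  have e2 : k = (k - 1) + 1 := by omega
  rw [e1]
  conv_lhs => rw [e2]
  rw [Nat.choose_succ_succ]
  congr 2 <;> omega
set_option maxHeartbeats 1000000 in
set_option synthInstance.maxHeartbeats 200000 in
/-- Theorem 2.6: if every `mᵢ := −2λᵢ` is a natural number in
`{0,…,k−1}` and `r = maxᵢ mᵢ`, then the dimension
`N_k + N_{k−1} − 2·rank T = dim ker T + dim coker T` of `H¹(sl(2), D_{λ,μ})` (for
`δ = k`) satisfies
`C(n+k−2, k) ≤ N_k + N_{k−1} − 2·rank T ≤ C(n+k−2, k) + 2·C(n+k−r−3, k−r−1)`. -/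
theorem cohomology_dim_bounds (n k : ℕ) (hn : 1 ≤ n) (hk : 1 ≤ k) (lam : Fin n → ℝ)
    (m : Fin n → ℕ) (hm : ∀ i, (m i : ℝ) = -(2 * lam i) ∧ m i < k)
    (r : ℕ) (hr : r = Finset.univ.sup m) :
    Nat.choose (n + k - 2) k
      ≤ Nat.card {α : Fin n → ℕ // ∑ i, α i = k}
          + Nat.card {β : Fin n → ℕ // ∑ i, β i = k - 1}
          - 2 * Module.finrank ℝ (LinearMap.range (Tmap n k hk lam)) ∧
    Nat.card {α : Fin n → ℕ // ∑ i, α i = k}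
        + Nat.card {β : Fin n → ℕ // ∑ i, β i = k - 1}
        - 2 * Module.finrank ℝ (LinearMap.range (Tmap n k hk lam))
      ≤ Nat.choose (n + k - 2) k + 2 * Nat.choose (n + k - r - 3) (k - r - 1) := by
  obtain ⟨n', rfl⟩ : ∃ n', n = n' + 1 := ⟨n - 1, by omega⟩
  have hne : (Finset.univ : Finset (Fin (n' + 1))).Nonempty := Finset.univ_nonempty
  obtain ⟨i₀, -, hi₀⟩ := Finset.exists_mem_eq_sup Finset.univ hne m
  have hmi₀ : m i₀ = r := by rw [hr, hi₀]
  have hrk : r ≤ k - 1 := by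
    rw [hr]
    exact Finset.sup_le fun i _ => by have := (hm i).2; omega
  have hlam : ∀ i, 2 * lam i = -(m i : ℝ) := fun i => by have := (hm i).1; linarith
  set S : Finset {β : Fin (n' + 1) → ℕ // ∑ i, β i = k - 1} :=
    Finset.univ.filter (fun β => β.1 i₀ = r) with hS
  set U : Submodule ℝ ({β : Fin (n' + 1) → ℕ // ∑ i, β i = k - 1} → ℝ) :=
    Submodule.span ℝ (↑(S.image (fun β => Pi.single β (1 : ℝ)))) with hU
  set M : Submodule ℝ ({β : Fin (n' + 1) → ℕ // ∑ i, β i = k - 1} → ℝ) :=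
    LinearMap.range (Tmap (n' + 1) k hk lam) ⊔ U with hM
  have key : ∀ d : ℕ, ∀ β : {β : Fin (n' + 1) → ℕ // ∑ i, β i = k - 1},
      k - 1 - β.1 i₀ = d → Pi.single β (1 : ℝ) ∈ M := by
    intro d
    induction d using Nat.strong_induction_on with
    | _ d ih =>
    intro β hβ
    by_cases hrr : β.1 i₀ = r
    · refine Submodule.mem_sup_right (Submodule.subset_span ?_)
      rw [Finset.mem_coe, Finset.mem_image]
      exact ⟨β, by simp [hS, hrr], rfl⟩
    · set α := upIdx (n' + 1) k hk β i₀ with hα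
      have hα0 : α.1 i₀ ≠ 0 := by rw [hα, upIdx_coord]; omega
      have hαc : α.1 i₀ = β.1 i₀ + 1 := by rw [hα, upIdx_coord]
      have hdown : downIdx (n' + 1) k α i₀ hα0 = β := down_up (n' + 1) k hk β i₀ hα0
      have hT := Tmap_single (n' + 1) k hk lam α
      have hsplit : (∑ i : Fin (n' + 1), if h : α.1 i ≠ 0 then
            ((α.1 i : ℝ) * ((α.1 i : ℝ) - 1 + 2 * lam i)) •
              (Pi.single (downIdx (n' + 1) k α i h) (1 : ℝ) :
                {β : Fin (n' + 1) → ℕ // ∑ i, β i = k - 1} → ℝ)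
          else 0)
          = ((α.1 i₀ : ℝ) * ((α.1 i₀ : ℝ) - 1 + 2 * lam i₀)) •
              (Pi.single β (1 : ℝ) : {β : Fin (n' + 1) → ℕ // ∑ i, β i = k - 1} → ℝ)
            + ∑ i ∈ Finset.univ.erase i₀, (if h : α.1 i ≠ 0 then
                ((α.1 i : ℝ) * ((α.1 i : ℝ) - 1 + 2 * lam i)) •
                  (Pi.single (downIdx (n' + 1) k α i h) (1 : ℝ) :
                    {β : Fin (n' + 1) → ℕ // ∑ i, β i = k - 1} → ℝ)
              else 0) := by
        rw [← Finset.add_sum_erase _ _ (Finset.mem_univ i₀), dif_pos hα0, hdown]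
      have hrest : (∑ i ∈ Finset.univ.erase i₀, (if h : α.1 i ≠ 0 then
            ((α.1 i : ℝ) * ((α.1 i : ℝ) - 1 + 2 * lam i)) •
              (Pi.single (downIdx (n' + 1) k α i h) (1 : ℝ) :
                {β : Fin (n' + 1) → ℕ // ∑ i, β i = k - 1} → ℝ)
          else 0)) ∈ M := by
        refine Submodule.sum_mem _ fun i hi => ?_
        have hii : i ≠ i₀ := (Finset.mem_erase.1 hi).1
        by_cases h0 : α.1 i ≠ 0
        · rw [dif_pos h0]
          have hcoord : (downIdx (n' + 1) k α i h0).1 i₀ = β.1 i₀ + 1 := by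
            rw [downIdx_coord_ne (n' + 1) k α i i₀ h0 (Ne.symm hii), hαc]
          have hle : β.1 i₀ + 1 ≤ k - 1 := by
            have := coord_le _ _ (downIdx (n' + 1) k α i h0) i₀
            omega
          exact Submodule.smul_mem _ _
            (ih (k - 1 - (β.1 i₀ + 1)) (by omega) _ (by rw [hcoord]))
        · rw [dif_neg h0]; exact Submodule.zero_mem _
      have hc : ((α.1 i₀ : ℝ) * ((α.1 i₀ : ℝ) - 1 + 2 * lam i₀)) ≠ 0 := by
        rw [hαc, hlam i₀, hmi₀]
        push_cast
        refine mul_ne_zero (by positivity) fun hcon => hrr ?_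
        have : (β.1 i₀ : ℝ) = r := by linarith
        exact_mod_cast this
      have hmem : ((α.1 i₀ : ℝ) * ((α.1 i₀ : ℝ) - 1 + 2 * lam i₀)) •
          (Pi.single β (1 : ℝ) : {β : Fin (n' + 1) → ℕ // ∑ i, β i = k - 1} → ℝ) ∈ M := by
        have h1 : Tmap (n' + 1) k hk lam (Pi.single α (1 : ℝ)) ∈ M :=
          Submodule.mem_sup_left (LinearMap.mem_range_self _ _)
        rw [hT, hsplit] at h1
        have h2 := Submodule.sub_mem M h1 hrest
        rwa [add_sub_cancel_right] at h2
      have h3 := Submodule.smul_mem M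
        (((α.1 i₀ : ℝ) * ((α.1 i₀ : ℝ) - 1 + 2 * lam i₀))⁻¹) hmem
      rwa [inv_smul_smul₀ hc] at h3
  have htop : M = ⊤ := by
    rw [eq_top_iff, ← (Pi.basisFun ℝ {β : Fin (n' + 1) → ℕ // ∑ i, β i = k - 1}).span_eq]
    refine Submodule.span_le.2 ?_
    rintro v ⟨β, rfl⟩
    rw [Pi.basisFun_apply]
    exact key _ β rfl
  -- counting facts
  have hUle : Module.finrank ℝ U ≤ S.card := by
    refine le_trans ?_ (Finset.card_image_le (f := fun β => Pi.single β (1 : ℝ)))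
    exact finrank_span_finset_le_card _
  have hScard : S.card ≤ (n' + 1 + k - r - 3).choose (k - r - 1) := by
    have hant : S.card ≤ (Finset.Nat.antidiagonalTuple n' (k - 1 - r)).card := by
      apply Finset.card_le_card_of_injOn (fun β => fun j => β.1 (i₀.succAbove j))
      · intro β hβ
        rw [Finset.mem_coe, Finset.Nat.mem_antidiagonalTuple]
        have hs := Fin.sum_univ_succAbove β.1 i₀
        have hβr : β.1 i₀ = r := by simpa [hS] using hβ
        have hb2 := β.2
        show ∑ j, β.1 (i₀.succAbove j) = k - 1 - r
        clear hUle
        omega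
      · intro β hβ β' hβ' hf
        apply Subtype.ext; funext i
        by_cases hi : i = i₀
        · subst hi
          have h1 : β.1 i = r := by simpa [hS] using hβ
          have h2 : β'.1 i = r := by simpa [hS] using hβ'
          rw [h1, h2]
        · obtain ⟨j, hj⟩ := Fin.exists_succAbove_eq hi
          rw [← hj]
          exact congrFun hf j
    have hant2 : (Finset.Nat.antidiagonalTuple n' (k - 1 - r)).card
        = (n' + (k - 1 - r) - 1).choose (k - 1 - r) := by
      rw [← Fintype.card_coe, ← Nat.card_eq_fintype_card,
        Nat.card_congr (Equiv.subtypeEquivRight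
          (fun x => Finset.Nat.mem_antidiagonalTuple)),
        card_sumTuple]
    have e1 : n' + (k - 1 - r) - 1 = n' + 1 + k - r - 3 := by
      clear hUle hant hant2; omega
    have e2 : k - 1 - r = k - r - 1 := by clear hUle hant hant2 e1; omega
    rw [hant2, e1, e2] at hant
    exact hant
  have hsup : Nat.card {β : Fin (n' + 1) → ℕ // ∑ i, β i = k - 1}
      ≤ Module.finrank ℝ (LinearMap.range (Tmap (n' + 1) k hk lam))
        + (n' + 1 + k - r - 3).choose (k - r - 1) := by
    have h1 := Submodule.finrank_sup_add_finrank_inf_eq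
      (LinearMap.range (Tmap (n' + 1) k hk lam)) U
    have h2 : Module.finrank ℝ M
        = Nat.card {β : Fin (n' + 1) → ℕ // ∑ i, β i = k - 1} := by
      rw [htop, finrank_top, Module.finrank_fintype_fun_eq_card, Nat.card_eq_fintype_card]
    have h3 : Module.finrank ℝ
        ↥(LinearMap.range (Tmap (n' + 1) k hk lam) ⊔ U)
        ≤ Module.finrank ℝ ↥(LinearMap.range (Tmap (n' + 1) k hk lam))
          + Module.finrank ℝ ↥U := Nat.le.intro h1
    rw [← hM] at h3
    exact le_of_eq h2.symm |>.trans <| h3.trans <|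
      Nat.add_le_add_left (hUle.trans hScard) _
  have hRle : Module.finrank ℝ (LinearMap.range (Tmap (n' + 1) k hk lam))
      ≤ Nat.card {β : Fin (n' + 1) → ℕ // ∑ i, β i = k - 1} := by
    rw [Nat.card_eq_fintype_card, ← Module.finrank_fintype_fun_eq_card ℝ]
    exact Submodule.finrank_le _
  have hcardB := card_B (n' + 1) k hn hk
  have hcardA := card_A (n' + 1) k hn hk
  generalize hR : Module.finrank ℝ (LinearMap.range (Tmap (n' + 1) k hk lam)) = R
    at hRle hsup ⊢
  generalize hNA : Nat.card {α : Fin (n' + 1) → ℕ // ∑ i, α i = k} = NA at hcardA ⊢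
  generalize hNB : Nat.card {β : Fin (n' + 1) → ℕ // ∑ i, β i = k - 1} = NB
    at hcardB hRle hsup ⊢
  clear * - hcardA hcardB hRle hsup hrk hk hn
  omega
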